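/- Box rounding of subgradients: let f: ℤⁿ → ℤ ∪ {+∞} be an integer-valued integrally convex function, x ∈ dom f, and p ∈ ℝⁿ a subgradient of f at x (i.e., f(y) - f(x) ≥ ⟨p, y-x⟩ for all y ∈ ℤⁿ). Then there exists an integer vector q ∈ ℤⁿ with ⌊pᵢ⌋ ≤ qᵢ ≤ ⌈pᵢ⌉ for all i such that q is also a subgradient of f at x. -/

import Mathlib

open scoped BigOperators

/-- The integral neighborhood N(u) = {z ∈ ℤⁿ : |uᵢ − zᵢ| < 1 for all i}. -/
def intNbhd {n : ℕ} (u : Fin n → ℝ) : Set (Fin n → ℤ) :=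
  {z | ∀ i, |u i - (z i : ℝ)| < 1}

/-- The local convex extension f̃(u): the infimum of convex combinations
Σ λ_z f(z) over points z of the integral neighborhood N(u) whose convex
combination with the weights λ equals u.  (It is +∞ when no such
combination exists.) -/
noncomputable def localConvexExt {n : ℕ} (f : (Fin n → ℤ) → EReal)
    (u : Fin n → ℝ) : EReal :=
  sInf { v : EReal | ∃ (t : Finset (Fin n → ℤ)) (lam : (Fin n → ℤ) → ℝ),
    (∀ z ∈ t, z ∈ intNbhd u) ∧ (∀ z ∈ t, 0 ≤ lam z) ∧
    (∑ z ∈ t, lam z) = 1 ∧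
    (∀ i, (∑ z ∈ t, lam z * (z i : ℝ)) = u i) ∧
    v = ∑ z ∈ t, (((lam z : ℝ) : EReal) * f z) }

/-- A function f : ℤⁿ → ℝ ∪ {+∞} with nonempty effective domain is
*integrally convex* if its local convex extension satisfies the midpoint
inequality f̃((x+y)/2) ≤ (f(x)+f(y))/2 for all x, y ∈ ℤⁿ with
‖x − y‖∞ ≥ 2 (this is equivalent to convexity of f̃ on ℝⁿ). -/
def IntegrallyConvexFn {n : ℕ} (f : (Fin n → ℤ) → EReal) : Prop :=
  (∃ x, f x ≠ ⊤) ∧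
  ∀ x y : Fin n → ℤ, (∃ i, 2 ≤ |x i - y i|) →
    localConvexExt f (fun i => ((x i + y i : ℤ) : ℝ) / 2) ≤ (f x + f y) / 2



lemma ereal_coe_sum {α : Type*} (s : Finset α) (g : α → ℝ) :
    (((∑ b ∈ s, g b : ℝ)) : EReal) = ∑ b ∈ s, ((g b : ℝ) : EReal) := by
  classical
  induction s using Finset.induction with
  | empty => simp
  | insert _ _ h ih => rw [Finset.sum_insert h, Finset.sum_insert h, EReal.coe_add, ih]

lemma ereal_aux_mul {l r : ℝ} {F : EReal} (hl : 0 ≤ l) (hle : ((r : ℝ) : EReal) ≤ F) :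
    ((l * r : ℝ) : EReal) ≤ ((l : ℝ) : EReal) * F := by
  rcases eq_or_lt_of_le hl with h0 | hpos
  · simp [← h0, EReal.zero_mul]
  · induction F with
    | bot => exact absurd hle (by simp [EReal.coe_ne_bot])
    | coe s =>
      rw [← EReal.coe_mul, EReal.coe_le_coe_iff]
      exact mul_le_mul_of_nonneg_left (EReal.coe_le_coe_iff.mp hle) hl
    | top =>
      rw [EReal.mul_top_of_pos (by exact_mod_cast hpos)]
      exact le_top

lemma ereal_half (a b : ℝ) : ((a : EReal) + (b : EReal)) / 2 = (((a + b) / 2 : ℝ) : EReal) := by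
  rw [EReal.coe_div, EReal.coe_add]
  norm_cast

/-- The master averaging lemma. -/
lemma master {n : ℕ} (f : (Fin n → ℤ) → EReal)
    (hfm : ∀ X Y : Fin n → ℤ, (∃ i, 2 ≤ |X i - Y i|) →
      localConvexExt f (fun i => ((X i + Y i : ℤ) : ℝ) / 2) ≤ (f X + f Y) / 2)
    (X Y : Fin n → ℤ) (hXY : ∃ i, 2 ≤ |X i - Y i|) (a b : ℝ)
    (ha : f X = ((a : ℝ) : EReal)) (hb : f Y = ((b : ℝ) : EReal))
    (c : ℝ) (w : Fin n → ℤ → ℝ)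
    (hsupp : ∀ z : Fin n → ℤ, (∀ i, |2 * z i - (X i + Y i)| ≤ 1) →
      (((c + ∑ i, w i (z i)) : ℝ) : EReal) ≤ f z)
    (hmin : ∀ i, ∃ al be : ℝ,
      (∀ e : ℤ, |2 * e - (X i + Y i)| ≤ 1 → al + be * (e : ℝ) ≤ w i e) ∧
      w i (X i) + w i (Y i) ≤ 2 * al + be * ((X i + Y i : ℤ) : ℝ)) :
    2 * c + ∑ i, (w i (X i) + w i (Y i)) ≤ a + b := by
  classical
  refine le_of_forall_pos_le_add fun ε hε => ?_
  set u : Fin n → ℝ := fun i => ((X i + Y i : ℤ) : ℝ) / 2 with hu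
  have hM := hfm X Y hXY
  rw [ha, hb, ereal_half] at hM
  have hlt : localConvexExt f u < (((a + b) / 2 + ε / 4 : ℝ) : EReal) :=
    lt_of_le_of_lt hM (by rw [EReal.coe_lt_coe_iff]; linarith)
  obtain ⟨v, hv, hvlt⟩ := sInf_lt_iff.mp hlt
  obtain ⟨t, lam, hN, h0, h1, hmarg, rfl⟩ := hv
  -- rounding condition for z ∈ t
  have hz2 : ∀ z ∈ t, ∀ i, |2 * z i - (X i + Y i)| ≤ 1 := by
    intro z hz i
    have := hN z hz i
    rw [hu] at this
    have h2 : |((X i + Y i : ℤ) : ℝ) - 2 * (z i : ℝ)| < 2 := by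
      rw [abs_sub_lt_iff] at this ⊢
      constructor <;> [linarith [this.1]; linarith [this.2]]
    have h3 : |(2 * z i - (X i + Y i) : ℤ)| < 2 := by
      have hc : |((2 * z i - (X i + Y i) : ℤ) : ℝ)| < 2 := by
        have he : ((2 * z i - (X i + Y i) : ℤ) : ℝ)
            = -(((X i + Y i : ℤ) : ℝ) - 2 * (z i : ℝ)) := by push_cast; ring
        rw [he, abs_neg]; exact h2
      exact_mod_cast hc
    omega
  -- key EReal inequality
  have key : (((∑ z ∈ t, lam z * (c + ∑ i, w i (z i)) : ℝ)) : EReal)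
      ≤ ∑ z ∈ t, (((lam z : ℝ) : EReal) * f z) := by
    rw [ereal_coe_sum]
    exact Finset.sum_le_sum fun z hz => ereal_aux_mul (h0 z hz) (hsupp z (hz2 z hz))
  have hreal : ∑ z ∈ t, lam z * (c + ∑ i, w i (z i)) < (a + b) / 2 + ε / 4 :=
    EReal.coe_lt_coe_iff.mp (key.trans_lt hvlt)
  -- lower bound the sum
  choose al be hmin1 hmin2 using hmin
  have hlow : c + ∑ i, (al i + be i * u i) ≤ ∑ z ∈ t, lam z * (c + ∑ i, w i (z i)) := by
    have e1 : ∑ z ∈ t, lam z * (c + ∑ i, w i (z i))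
        = c + ∑ i, ∑ z ∈ t, lam z * w i (z i) := by
      rw [Finset.sum_congr rfl (fun z _ => mul_add (lam z) c _)]
      rw [Finset.sum_add_distrib, ← Finset.sum_mul, h1, one_mul]
      congr 1
      rw [Finset.sum_congr rfl (fun z _ => Finset.mul_sum _ _ (lam z))]
      exact Finset.sum_comm
    rw [e1]
    have e2 : ∀ i, al i + be i * u i ≤ ∑ z ∈ t, lam z * w i (z i) := by
      intro i
      have e3 : ∑ z ∈ t, lam z * (al i + be i * (z i : ℝ)) = al i + be i * u i := by
        rw [Finset.sum_congr rfl (fun z _ => mul_add (lam z) (al i) _)]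
        rw [Finset.sum_add_distrib, ← Finset.sum_mul, h1, one_mul]
        congr 1
        rw [← hmarg i, Finset.mul_sum]
        exact Finset.sum_congr rfl fun z _ => by ring
      rw [← e3]
      exact Finset.sum_le_sum fun z hz =>
        mul_le_mul_of_nonneg_left (hmin1 i (z i) (hz2 z hz i)) (h0 z hz)
    linarith [Finset.sum_le_sum fun i (_ : i ∈ Finset.univ) => e2 i]
  -- combine
  have hcomb : ∑ i, (w i (X i) + w i (Y i)) ≤ ∑ i, (2 * al i + 2 * (be i * u i)) := by
    refine Finset.sum_le_sum fun i _ => ?_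
    have : 2 * (be i * u i) = be i * ((X i + Y i : ℤ) : ℝ) := by
      rw [hu]; push_cast; ring
    rw [this]
    exact hmin2 i
  have : ∑ i, (2 * al i + 2 * (be i * u i)) = 2 * ∑ i, (al i + be i * u i) := by
    rw [Finset.mul_sum]
    exact Finset.sum_congr rfl fun i _ => by ring
  linarith



noncomputable def capIt {n : ℕ} (p : Fin n → ℝ) (i : Fin n) (s : ℤ) : ℤ :=
  if s = 1 then ⌊p i⌋ else if s = -1 then -⌈p i⌉ else 0

lemma capIt_minorant {n : ℕ} (p : Fin n → ℝ) (i : Fin n) (xi a b : ℤ)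
    (ha : |a| ≤ 1) (hb : |b| ≤ 1) :
    ∃ al be : ℝ,
      (∀ e : ℤ, |2 * e - ((xi + a) + (xi + b))| ≤ 1 →
        al + be * (e : ℝ) ≤ ((capIt p i (e - xi) : ℤ) : ℝ)) ∧
      ((capIt p i a : ℤ) : ℝ) + ((capIt p i b : ℤ) : ℝ)
        ≤ 2 * al + be * (((xi + a) + (xi + b) : ℤ) : ℝ) := by
  have ha' := abs_le.mp ha
  have hb' := abs_le.mp hb
  have hfc : (⌊p i⌋ : ℝ) ≤ (⌈p i⌉ : ℝ) := by
    exact_mod_cast Int.floor_le_ceil (p i)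
  -- helper to evaluate capIt
  have c1 : capIt p i 1 = ⌊p i⌋ := by simp [capIt]
  have cm1 : capIt p i (-1) = -⌈p i⌉ := by simp [capIt]
  have c0 : capIt p i 0 = 0 := by simp [capIt]
  obtain ⟨ha1, ha2⟩ := ha'
  obtain ⟨hb1, hb2⟩ := hb'
  interval_cases a <;> interval_cases b
  -- (-1,-1)
  · refine ⟨-(⌈p i⌉ : ℝ), 0, fun e he => ?_, ?_⟩
    · have h' := abs_le.mp he
      have h1 : e - xi = -1 := by omega
      rw [h1, cm1]; push_cast; linarith
    · rw [cm1]; push_cast; linarith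
  -- (-1,0)
  · refine ⟨-((⌈p i⌉ : ℝ) * (xi : ℝ)), (⌈p i⌉ : ℝ), fun e he => ?_, ?_⟩
    · have h' := abs_le.mp he
      have h1 : e - xi = -1 ∨ e - xi = 0 := by omega
      rcases h1 with h1 | h1
      · have hcast : (e : ℝ) = (xi : ℝ) - 1 := by
          have : e = xi - 1 := by omega
          rw [this]; push_cast; ring
        rw [h1, cm1, hcast]; push_cast; ring_nf; linarith [le_refl (0:ℝ)]
      · have hcast : (e : ℝ) = (xi : ℝ) := by
          have : e = xi := by omega
          rw [this]
        rw [h1, c0, hcast]; push_cast; ring_nf; linarith [le_refl (0:ℝ)]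
    · rw [cm1, c0]; push_cast; ring_nf; linarith [le_refl (0:ℝ)]
  -- (-1,1)
  · refine ⟨0, 0, fun e he => ?_, ?_⟩
    · have h' := abs_le.mp he
      have h1 : e - xi = 0 := by omega
      rw [h1, c0]; push_cast; linarith
    · rw [cm1, c1]; push_cast; linarith
  -- (0,-1)
  · refine ⟨-((⌈p i⌉ : ℝ) * (xi : ℝ)), (⌈p i⌉ : ℝ), fun e he => ?_, ?_⟩
    · have h' := abs_le.mp he
      have h1 : e - xi = -1 ∨ e - xi = 0 := by omega
      rcases h1 with h1 | h1
      · have hcast : (e : ℝ) = (xi : ℝ) - 1 := by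
          have : e = xi - 1 := by omega
          rw [this]; push_cast; ring
        rw [h1, cm1, hcast]; push_cast; ring_nf; linarith [le_refl (0:ℝ)]
      · have hcast : (e : ℝ) = (xi : ℝ) := by
          have : e = xi := by omega
          rw [this]
        rw [h1, c0, hcast]; push_cast; ring_nf; linarith [le_refl (0:ℝ)]
    · rw [cm1, c0]; push_cast; ring_nf; linarith [le_refl (0:ℝ)]
  -- (0,0)
  · refine ⟨0, 0, fun e he => ?_, ?_⟩
    · have h' := abs_le.mp he
      have h1 : e - xi = 0 := by omega
      rw [h1, c0]; push_cast; linarith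
    · rw [c0]; push_cast; linarith
  -- (0,1)
  · refine ⟨-((⌊p i⌋ : ℝ) * (xi : ℝ)), (⌊p i⌋ : ℝ), fun e he => ?_, ?_⟩
    · have h' := abs_le.mp he
      have h1 : e - xi = 0 ∨ e - xi = 1 := by omega
      rcases h1 with h1 | h1
      · have hcast : (e : ℝ) = (xi : ℝ) := by
          have : e = xi := by omega
          rw [this]
        rw [h1, c0, hcast]; push_cast; ring_nf; linarith [le_refl (0:ℝ)]
      · have hcast : (e : ℝ) = (xi : ℝ) + 1 := by
          have : e = xi + 1 := by omega
          rw [this]; push_cast; ring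
        rw [h1, c1, hcast]; push_cast; ring_nf; linarith [le_refl (0:ℝ)]
    · rw [c0, c1]; push_cast; ring_nf; linarith [le_refl (0:ℝ)]
  -- (1,-1)
  · refine ⟨0, 0, fun e he => ?_, ?_⟩
    · have h' := abs_le.mp he
      have h1 : e - xi = 0 := by omega
      rw [h1, c0]; push_cast; linarith
    · rw [cm1, c1]; push_cast; linarith
  -- (1,0)
  · refine ⟨-((⌊p i⌋ : ℝ) * (xi : ℝ)), (⌊p i⌋ : ℝ), fun e he => ?_, ?_⟩
    · have h' := abs_le.mp he
      have h1 : e - xi = 0 ∨ e - xi = 1 := by omega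
      rcases h1 with h1 | h1
      · have hcast : (e : ℝ) = (xi : ℝ) := by
          have : e = xi := by omega
          rw [this]
        rw [h1, c0, hcast]; push_cast; ring_nf; linarith [le_refl (0:ℝ)]
      · have hcast : (e : ℝ) = (xi : ℝ) + 1 := by
          have : e = xi + 1 := by omega
          rw [this]; push_cast; ring
        rw [h1, c1, hcast]; push_cast; ring_nf; linarith [le_refl (0:ℝ)]
    · rw [c0, c1]; push_cast; ring_nf; linarith [le_refl (0:ℝ)]
  -- (1,1)
  · refine ⟨(⌊p i⌋ : ℝ), 0, fun e he => ?_, ?_⟩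
    · have h' := abs_le.mp he
      have h1 : e - xi = 1 := by omega
      rw [h1, c1]; push_cast; linarith
    · rw [c1]; push_cast; linarith

noncomputable def WkZ {n : ℕ} (p : Fin n → ℝ) (k : ℕ) (q : Fin n → ℤ)
    (e : Fin n → ℤ) : ℤ :=
  ∑ i : Fin n, (if (i : ℕ) < k then q i * e i else capIt p i (e i))

section FM

variable {n : ℕ} (f : (Fin n → ℤ) → EReal) (p : Fin n → ℝ)

lemma WkZ_cast (k : ℕ) (q e : Fin n → ℤ) :
    ((WkZ p k q e : ℤ) : ℝ)
      = ∑ i : Fin n, (if (i : ℕ) < k then (q i : ℝ) * (e i : ℝ)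
          else ((capIt p i (e i) : ℤ) : ℝ)) := by
  unfold WkZ
  rw [Int.cast_sum]
  exact Finset.sum_congr rfl fun i _ => by split <;> push_cast <;> ring

lemma exists_local
    (hZ : ∀ z, f z = ⊤ ∨ ∃ m : ℤ, f z = ((m : ℝ) : EReal))
    (hfm : ∀ X Y : Fin n → ℤ, (∃ i, 2 ≤ |X i - Y i|) →
      localConvexExt f (fun i => ((X i + Y i : ℤ) : ℝ) / 2) ≤ (f X + f Y) / 2)
    (x : Fin n → ℤ) (fx : ℤ) (hfx : f x = ((fx : ℝ) : EReal))
    (hp : ∀ y : Fin n → ℤ,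
      (((∑ i, p i * ((y i - x i : ℤ) : ℝ)) : ℝ) : EReal) + f x ≤ f y) :
    ∃ q : Fin n → ℤ, (∀ i, ⌊p i⌋ ≤ q i ∧ q i ≤ ⌈p i⌉) ∧
      ∀ e : Fin n → ℤ, (∀ i, |e i| ≤ 1) →
        (((∑ i, (q i : ℝ) * (e i : ℝ)) : ℝ) : EReal) + f x
          ≤ f (fun i => x i + e i) := by
  classical
  -- integer values of f
  set fZv : (Fin n → ℤ) → ℤ := fun z =>
    if h : ∃ m : ℤ, f z = ((m : ℝ) : EReal) then h.choose else 0 with hfZv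
  have hfZ : ∀ z, f z ≠ ⊤ → f z = ((fZv z : ℝ) : EReal) := by
    intro z hz
    rcases hZ z with h | h
    · exact absurd h hz
    · rw [hfZv]; simp only [dif_pos h]; exact h.choose_spec
  -- the Fourier--Motzkin induction
  have main : ∀ k : ℕ, k ≤ n → ∃ q : Fin n → ℤ,
      (∀ i : Fin n, (i : ℕ) < k → ⌊p i⌋ ≤ q i ∧ q i ≤ ⌈p i⌉) ∧
      (∀ e : Fin n → ℤ, (∀ i, |e i| ≤ 1) →
        (((WkZ p k q e : ℤ) : ℝ) : EReal) + f x ≤ f (fun i => x i + e i)) := by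
    intro k
    induction k with
    | zero =>
      intro _
      refine ⟨fun _ => 0, fun i hi => absurd hi (by omega), fun e he => ?_⟩
      have h1 : ((WkZ p 0 (fun _ => 0) e : ℤ) : ℝ) ≤ ∑ i, p i * (e i : ℝ) := by
        rw [WkZ_cast]
        refine Finset.sum_le_sum fun i _ => ?_
        have he' := abs_le.mp (he i)
        have hcase : e i = -1 ∨ e i = 0 ∨ e i = 1 := by omega
        simp only [Nat.not_lt_zero, if_false]
        rcases hcase with h | h | h <;> rw [h] <;> simp [capIt]
        · have := Int.le_ceil (p i)
          push_cast
          linarith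
        · exact Int.floor_le (p i)
      have h2 := hp (fun i => x i + e i)
      have h3 : ∑ i, p i * (((fun i => x i + e i) i - x i : ℤ) : ℝ)
          = ∑ i, p i * (e i : ℝ) := by
        refine Finset.sum_congr rfl fun i _ => ?_
        simp only []
        push_cast
        ring
      rw [h3] at h2
      refine le_trans ?_ h2
      exact add_le_add_left (EReal.coe_le_coe_iff.mpr h1) _
    | succ k IH =>
      intro hk1
      have hkn : k < n := by omega
      obtain ⟨q, hqbox, hS⟩ := IH (by omega)
      set κ : Fin n := ⟨k, hkn⟩ with hκ
      have hκval : (κ : ℕ) = k := rfl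
      -- real-valued consequence of hS for finite values
      have F1 : ∀ e : Fin n → ℤ, (∀ i, |e i| ≤ 1) → f (fun i => x i + e i) ≠ ⊤ →
          (WkZ p k q e : ℝ) + (fx : ℝ) ≤ (fZv (fun i => x i + e i) : ℝ) := by
        intro e he htop
        have h := hS e he
        rw [hfx, hfZ _ htop, ← EReal.coe_add, EReal.coe_le_coe_iff] at h
        exact h
      -- candidate set
      set signs : Finset (Fin n → ℤ) :=
        Fintype.piFinset fun _ => ({-1, 0, 1} : Finset ℤ) with hsigns
      have hsigns_mem : ∀ v : Fin n → ℤ, v ∈ signs ↔ ∀ i, |v i| ≤ 1 := by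
        intro v
        rw [hsigns, Fintype.mem_piFinset]
        constructor
        · intro h i
          have := h i
          simp only [Finset.mem_insert, Finset.mem_singleton] at this
          rcases this with h | h | h <;> rw [h] <;> decide
        · intro h i
          have := abs_le.mp (h i)
          simp only [Finset.mem_insert, Finset.mem_singleton]
          omega
      set Vp : Finset (Fin n → ℤ) :=
        signs.filter (fun v => v κ = 1 ∧ f (fun i => x i + v i) ≠ ⊤) with hVp
      set Uval : (Fin n → ℤ) → ℤ :=
        fun v => fZv (fun i => x i + v i) - fx - WkZ p k q v with hUval
      set cand : Finset ℤ := insert ⌈p κ⌉ (Vp.image fun v => Uval v + ⌊p κ⌋) with hcand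
      have hcne : cand.Nonempty := ⟨⌈p κ⌉, Finset.mem_insert_self _ _⟩
      set qk : ℤ := cand.min' hcne with hqk
      set q' : Fin n → ℤ := Function.update q κ qk with hq'
      -- basic facts about Vp elements
      have hVp_mem : ∀ v ∈ Vp, (∀ i, |v i| ≤ 1) ∧ v κ = 1 ∧ f (fun i => x i + v i) ≠ ⊤ := by
        intro v hv
        rw [hVp, Finset.mem_filter] at hv
        exact ⟨(hsigns_mem v).mp hv.1, hv.2.1, hv.2.2⟩
      -- (c) : Uval is nonnegative on Vp
      have hUnn : ∀ v ∈ Vp, 0 ≤ Uval v := by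
        intro v hv
        obtain ⟨hv1, _, hv3⟩ := hVp_mem v hv
        have h := F1 v hv1 hv3
        have h2 : WkZ p k q v + fx ≤ fZv (fun i => x i + v i) := by exact_mod_cast h
        simp only [hUval]
        omega
      -- qk is in the box
      have hqk_le : qk ≤ ⌈p κ⌉ := Finset.min'_le _ _ (Finset.mem_insert_self _ _)
      have hqk_ge : ⌊p κ⌋ ≤ qk := by
        rw [hqk]
        refine Finset.le_min' _ _ _ fun b hb => ?_
        rw [hcand] at hb
        rcases Finset.mem_insert.mp hb with rfl | hb
        · exact Int.floor_le_ceil (p κ)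
        · obtain ⟨v, hv, rfl⟩ := Finset.mem_image.mp hb
          have := hUnn v hv
          omega
      -- the key Fourier--Motzkin pairing inequality, via the master lemma
      have keyIneq : ∀ v ∈ Vp, ∀ eh : Fin n → ℤ, (∀ i, |eh i| ≤ 1) → eh κ = -1 →
          f (fun i => x i + eh i) ≠ ⊤ →
          WkZ p k q eh + ⌈p κ⌉ + fx - fZv (fun i => x i + eh i) ≤ Uval v + ⌊p κ⌋ := by
        intro v hv eh heh1 hehκ htop
        obtain ⟨hv1, hvκ, hvtop⟩ := hVp_mem v hv
        have hXY : ∃ i, 2 ≤ |(fun i => x i + v i) i - (fun i => x i + eh i) i| := by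
          refine ⟨κ, ?_⟩
          simp only []
          rw [hvκ, hehκ]
          have : x κ + 1 - (x κ + -1) = 2 := by ring
          rw [this]
          norm_num
        have hconc := master f hfm (fun i => x i + v i) (fun i => x i + eh i) hXY
          (fZv (fun i => x i + v i)) (fZv (fun i => x i + eh i))
          (hfZ _ hvtop) (hfZ _ htop) (fx : ℝ)
          (fun i e => if i = κ then 0
            else (if (i : ℕ) < k then (q i : ℝ) * ((e - x i : ℤ) : ℝ)
              else ((capIt p i (e - x i) : ℤ) : ℝ))) ?_ ?_
        · -- conclude from the master inequality
          have hsplit : ∀ g : Fin n → ℝ,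
              ∑ i, (if i = κ then (0:ℝ) else g i) = (∑ i, g i) - g κ := by
            intro g
            have hterm : ∀ i ∈ Finset.univ, (if i = κ then (0:ℝ) else g i)
                = g i - (if i = κ then g i else 0) := by
              intro i _
              by_cases hiκ : i = κ <;> simp [hiκ]
            rw [Finset.sum_congr rfl hterm, Finset.sum_sub_distrib]
            congr 1
            rw [Finset.sum_ite_eq' Finset.univ κ g]
            simp
          have h1 : ¬ ((κ : ℕ) < k) := by omega
          have hsX : ∑ i, (if i = κ then (0:ℝ)
                else (if (i : ℕ) < k then (q i : ℝ) * (((fun i => x i + v i) i - x i : ℤ) : ℝ)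
                  else ((capIt p i ((fun i => x i + v i) i - x i) : ℤ) : ℝ)))
              = ((WkZ p k q v : ℤ) : ℝ) - ((⌊p κ⌋ : ℤ) : ℝ) := by
            have hb : ∀ i : Fin n, (fun i => x i + v i) i - x i = v i := fun i => by
              simp only []; ring
            have hc : ∀ i ∈ Finset.univ, (if i = κ then (0:ℝ)
                else (if (i : ℕ) < k then (q i : ℝ) * (((fun i => x i + v i) i - x i : ℤ) : ℝ)
                  else ((capIt p i ((fun i => x i + v i) i - x i) : ℤ) : ℝ)))
                = (if i = κ then (0:ℝ)
                else (if (i : ℕ) < k then (q i : ℝ) * ((v i : ℤ) : ℝ)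
                  else ((capIt p i (v i) : ℤ) : ℝ))) := by
              intro i _
              rw [hb i]
            rw [Finset.sum_congr rfl hc, hsplit, ← WkZ_cast]
            rw [if_neg h1, hvκ]
            simp [capIt]
          have hsY : ∑ i, (if i = κ then (0:ℝ)
                else (if (i : ℕ) < k then (q i : ℝ) * (((fun i => x i + eh i) i - x i : ℤ) : ℝ)
                  else ((capIt p i ((fun i => x i + eh i) i - x i) : ℤ) : ℝ)))
              = ((WkZ p k q eh : ℤ) : ℝ) + ((⌈p κ⌉ : ℤ) : ℝ) := by
            have hb : ∀ i : Fin n, (fun i => x i + eh i) i - x i = eh i := fun i => by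
              simp only []; ring
            have hc : ∀ i ∈ Finset.univ, (if i = κ then (0:ℝ)
                else (if (i : ℕ) < k then (q i : ℝ) * (((fun i => x i + eh i) i - x i : ℤ) : ℝ)
                  else ((capIt p i ((fun i => x i + eh i) i - x i) : ℤ) : ℝ)))
                = (if i = κ then (0:ℝ)
                else (if (i : ℕ) < k then (q i : ℝ) * ((eh i : ℤ) : ℝ)
                  else ((capIt p i (eh i) : ℤ) : ℝ))) := by
              intro i _
              rw [hb i]
            rw [Finset.sum_congr rfl hc, hsplit, ← WkZ_cast]
            rw [if_neg h1, hehκ]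
            simp [capIt]
          rw [Finset.sum_add_distrib, hsX, hsY] at hconc
          have hint : 2 * fx + ((WkZ p k q v - ⌊p κ⌋) + (WkZ p k q eh + ⌈p κ⌉))
              ≤ fZv (fun i => x i + v i) + fZv (fun i => x i + eh i) := by
            exact_mod_cast hconc
          have hU : Uval v = fZv (fun i => x i + v i) - fx - WkZ p k q v := rfl
          rw [hU]
          omega
        · -- hsupp
          intro z hz
          have hzκ : z κ = x κ := by
            have h := abs_le.mp (hz κ)
            rw [hvκ, hehκ] at h
            omega
          have hez1 : ∀ i, |z i - x i| ≤ 1 := by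
            intro i
            have h := abs_le.mp (hz i)
            have hvi := abs_le.mp (hv1 i)
            have hei := abs_le.mp (heh1 i)
            rw [abs_le]
            omega
          have hsum : ∑ i, ((fun i e => if i = κ then (0:ℝ)
                else (if (i : ℕ) < k then (q i : ℝ) * ((e - x i : ℤ) : ℝ)
                  else ((capIt p i (e - x i) : ℤ) : ℝ))) i (z i))
              = ((WkZ p k q (fun i => z i - x i) : ℤ) : ℝ) := by
            rw [WkZ_cast]
            refine Finset.sum_congr rfl fun i _ => ?_
            by_cases hiκ : i = κ
            · subst hiκ
              simp only [if_pos rfl, if_neg (show ¬ ((κ : ℕ) < k) by omega)]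
              rw [hzκ]
              simp [capIt]
            · simp only [if_neg hiκ]
          have h := hS (fun i => z i - x i) hez1
          have hfz : (fun i => x i + (z i - x i)) = z := by funext i; ring
          rw [hfz, hfx, ← EReal.coe_add] at h
          have harr : (fx : ℝ) + ∑ i, ((fun i e => if i = κ then (0:ℝ)
                else (if (i : ℕ) < k then (q i : ℝ) * ((e - x i : ℤ) : ℝ)
                  else ((capIt p i (e - x i) : ℤ) : ℝ))) i (z i))
              = ((WkZ p k q (fun i => z i - x i) : ℤ) : ℝ) + (fx : ℝ) := by
            rw [hsum]; ring
          rw [harr]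
          exact h
        · -- hmin
          intro i
          by_cases hiκ : i = κ
          · exact ⟨0, 0, fun e _ => by simp [hiκ], by simp [hiκ]⟩
          · by_cases hik : (i : ℕ) < k
            · refine ⟨-((q i : ℝ) * (x i : ℝ)), (q i : ℝ), fun e _ => ?_, ?_⟩
              · simp only [if_neg hiκ, if_pos hik]
                refine le_of_eq ?_
                push_cast
                ring
              · simp only [if_neg hiκ, if_pos hik]
                refine le_of_eq ?_
                push_cast
                ring
            · obtain ⟨al, be, H1, H2⟩ :=
                capIt_minorant p i (x i) (v i) (eh i) (hv1 i) (heh1 i)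
              refine ⟨al, be, fun e he => ?_, ?_⟩
              · simp only [if_neg hiκ, if_neg hik]
                exact H1 e he
              · simp only [if_neg hiκ, if_neg hik]
                have hbv : (fun i => x i + v i) i - x i = v i := by simp only []; ring
                have hbe : (fun i => x i + eh i) i - x i = eh i := by simp only []; ring
                rw [hbv, hbe]
                exact H2

      -- relation between the two levels of WkZ
      have hWrel : ∀ e : Fin n → ℤ,
          WkZ p (k+1) q' e = WkZ p k q e - capIt p κ (e κ) + qk * e κ := by
        intro e
        unfold WkZ
        have hterm : ∀ i ∈ (Finset.univ : Finset (Fin n)),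
            (if (i : ℕ) < k + 1 then q' i * e i else capIt p i (e i))
            = (if (i : ℕ) < k then q i * e i else capIt p i (e i))
              + (if i = κ then qk * e κ - capIt p κ (e κ) else 0) := by
          intro i _
          by_cases hiκ : i = κ
          · rw [hiκ]
            rw [if_pos (show (κ : ℕ) < k + 1 by omega),
              if_neg (show ¬ ((κ : ℕ) < k) by omega), if_pos rfl]
            rw [hq', Function.update_self]
            ring
          · have hne : q' i = q i := by rw [hq']; exact Function.update_of_ne hiκ _ _
            rw [if_neg hiκ, add_zero]
            by_cases hik : (i : ℕ) < k
            · rw [if_pos hik, if_pos (by omega : (i : ℕ) < k + 1), hne]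
            · have hik2 : (i : ℕ) ≠ k := fun hc => hiκ (Fin.ext (by omega))
              rw [if_neg hik, if_neg (by omega : ¬ ((i : ℕ) < k + 1))]
        rw [Finset.sum_congr rfl hterm, Finset.sum_add_distrib,
          Finset.sum_ite_eq' Finset.univ κ _]
        simp only [Finset.mem_univ, if_true]
        ring
      refine ⟨q', fun i hi => ?_, fun e he => ?_⟩
      · by_cases hik : (i : ℕ) < k
        · have hiκ : i ≠ κ := fun hc => by
            rw [hc] at hik
            omega
          rw [hq', Function.update_of_ne hiκ]
          exact hqbox i hik
        · have hiκ : i = κ := Fin.ext (by omega)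
          rw [hq', hiκ, Function.update_self]
          exact ⟨hqk_ge, hqk_le⟩
      · have heκ := abs_le.mp (he κ)
        have hcase : e κ = -1 ∨ e κ = 0 ∨ e κ = 1 := by omega
        rcases hcase with h0 | h0 | h0
        · -- e κ = -1
          by_cases htop : f (fun i => x i + e i) = ⊤
          · rw [htop]; exact le_top
          · have hL : WkZ p k q e + ⌈p κ⌉ + fx - fZv (fun i => x i + e i) ≤ qk := by
              rw [hqk]
              refine Finset.le_min' _ _ _ fun b hb => ?_
              rw [hcand] at hb
              rcases Finset.mem_insert.mp hb with rfl | hb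
              · have h := F1 e he htop
                have h2 : WkZ p k q e + fx ≤ fZv (fun i => x i + e i) := by
                  exact_mod_cast h
                omega
              · obtain ⟨v, hv, rfl⟩ := Finset.mem_image.mp hb
                exact keyIneq v hv e he h0 htop
            rw [hfx, hfZ _ htop, ← EReal.coe_add, EReal.coe_le_coe_iff]
            have hfin : WkZ p (k+1) q' e + fx ≤ fZv (fun i => x i + e i) := by
              rw [hWrel e, h0]
              have hcap : capIt p κ (-1) = -⌈p κ⌉ := by simp [capIt]
              rw [hcap]
              omega
            exact_mod_cast hfin
        · -- e κ = 0
          have heq : WkZ p (k+1) q' e = WkZ p k q e := by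
            rw [hWrel e, h0]
            simp [capIt]
          rw [heq]
          exact hS e he
        · -- e κ = 1
          by_cases htop : f (fun i => x i + e i) = ⊤
          · rw [htop]; exact le_top
          · have hmemVp : e ∈ Vp := by
              rw [hVp, Finset.mem_filter]
              exact ⟨(hsigns_mem e).mpr he, h0, htop⟩
            have hU : qk ≤ Uval e + ⌊p κ⌋ := by
              rw [hqk]
              refine Finset.min'_le _ _ ?_
              rw [hcand]
              exact Finset.mem_insert_of_mem (Finset.mem_image_of_mem _ hmemVp)
            rw [hfx, hfZ _ htop, ← EReal.coe_add, EReal.coe_le_coe_iff]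
            have hUe : Uval e = fZv (fun i => x i + e i) - fx - WkZ p k q e := rfl
            have hfin : WkZ p (k+1) q' e + fx ≤ fZv (fun i => x i + e i) := by
              rw [hWrel e, h0]
              have hcap : capIt p κ 1 = ⌊p κ⌋ := by simp [capIt]
              rw [hcap]
              rw [hUe] at hU
              omega
            exact_mod_cast hfin
  obtain ⟨q, hbox, hSn⟩ := main n le_rfl
  refine ⟨q, fun i => hbox i i.isLt, fun e he => ?_⟩
  have h := hSn e he
  have hsum : ((WkZ p n q e : ℤ) : ℝ) = ∑ i, (q i : ℝ) * (e i : ℝ) := by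
    rw [WkZ_cast]
    exact Finset.sum_congr rfl fun i _ => by rw [if_pos i.isLt]
  rw [hsum] at h
  exact h

end FM

lemma local_to_global {n : ℕ} (f : (Fin n → ℤ) → EReal)
    (hZ : ∀ z, f z = ⊤ ∨ ∃ m : ℤ, f z = ((m : ℝ) : EReal))
    (hfm : ∀ X Y : Fin n → ℤ, (∃ i, 2 ≤ |X i - Y i|) →
      localConvexExt f (fun i => ((X i + Y i : ℤ) : ℝ) / 2) ≤ (f X + f Y) / 2)
    (x : Fin n → ℤ) (fx : ℤ) (hfx : f x = ((fx : ℝ) : EReal))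
    (q : Fin n → ℤ)
    (hloc : ∀ e : Fin n → ℤ, (∀ i, |e i| ≤ 1) →
      (((∑ i, (q i : ℝ) * (e i : ℝ)) : ℝ) : EReal) + f x ≤ f (fun i => x i + e i)) :
    ∀ y : Fin n → ℤ,
      (((∑ i, (q i : ℝ) * ((y i - x i : ℤ) : ℝ)) : ℝ) : EReal) + f x ≤ f y := by
  classical
  suffices H : ∀ N : ℕ, ∀ y : Fin n → ℤ, (∀ i, (y i - x i).natAbs ≤ N) →
      (((∑ i, (q i : ℝ) * ((y i - x i : ℤ) : ℝ)) : ℝ) : EReal) + f x ≤ f y by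
    intro y
    exact H (Finset.univ.sup fun i => (y i - x i).natAbs) y
      (fun i => Finset.le_sup (f := fun i => (y i - x i).natAbs) (Finset.mem_univ i))
  intro N
  induction N using Nat.strong_induction_on with
  | _ N IH =>
    intro y hy
    by_cases hN1 : ∀ i, (y i - x i).natAbs ≤ 1
    · have h := hloc (fun i => y i - x i)
        (fun i => by rw [abs_le]; have := hN1 i; omega)
      have he : (fun i => x i + (y i - x i)) = y := by funext i; ring
      rwa [he] at h
    · push_neg at hN1
      obtain ⟨i₀, hi₀⟩ := hN1
      have hN2 : 2 ≤ N := by have := hy i₀; omega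
      rcases hZ y with htop | ⟨b, hfy⟩
      · rw [htop]; exact le_top
      have hXY : ∃ i, 2 ≤ |x i - y i| := ⟨i₀, by rw [le_abs]; omega⟩
      have hconc := master f hfm x y hXY fx b hfx hfy (fx : ℝ)
        (fun i e => (q i : ℝ) * ((e - x i : ℤ) : ℝ))
        (fun z hz => by
          have hzb : ∀ i, (z i - x i).natAbs ≤ N - 1 := by
            intro i
            have h1 := abs_le.mp (hz i)
            have h2 := hy i
            omega
          have h := IH (N - 1) (by omega) z hzb
          rw [hfx] at h
          show (((fx : ℝ) + ∑ i, (q i : ℝ) * ((z i - x i : ℤ) : ℝ) : ℝ) : EReal) ≤ f z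
          have e1 : ((fx : ℝ) + ∑ i, (q i : ℝ) * ((z i - x i : ℤ) : ℝ) : ℝ)
              = (∑ i, (q i : ℝ) * ((z i - x i : ℤ) : ℝ)) + (fx : ℝ) := by ring
          rw [e1, EReal.coe_add]
          exact h)
        (fun i => ⟨-((q i : ℝ) * (x i : ℝ)), (q i : ℝ),
          fun e _ => le_of_eq (by push_cast; ring),
          le_of_eq (by push_cast; ring)⟩)
      rw [hfx, hfy, ← EReal.coe_add, EReal.coe_le_coe_iff]
      have hsum : ∑ i, ((q i : ℝ) * ((x i - x i : ℤ) : ℝ) + (q i : ℝ) * ((y i - x i : ℤ) : ℝ))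
          = ∑ i, (q i : ℝ) * ((y i - x i : ℤ) : ℝ) := by
        refine Finset.sum_congr rfl fun i _ => ?_
        push_cast
        ring
      rw [hsum] at hconc
      linarith


/-- **Box rounding of subgradients.**  If f : ℤⁿ → ℤ ∪ {+∞} is an
integer-valued integrally convex function, x ∈ dom f, and p ∈ ℝⁿ is a
subgradient of f at x, then some integer vector q with
⌊pᵢ⌋ ≤ qᵢ ≤ ⌈pᵢ⌉ for all i is also a subgradient of f at x. -/
theorem integral_subgradient_box_rounding (n : ℕ)
    (f : (Fin n → ℤ) → EReal)
    (hZ : ∀ z, f z = ⊤ ∨ ∃ m : ℤ, f z = ((m : ℝ) : EReal))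
    (hf : IntegrallyConvexFn f) (x : Fin n → ℤ) (hx : f x ≠ ⊤)
    (p : Fin n → ℝ)
    (hp : ∀ y : Fin n → ℤ,
      (((∑ i, p i * ((y i - x i : ℤ) : ℝ)) : ℝ) : EReal) + f x ≤ f y) :
    ∃ q : Fin n → ℤ, (∀ i, ⌊p i⌋ ≤ q i ∧ q i ≤ ⌈p i⌉) ∧
      ∀ y : Fin n → ℤ,
        (((∑ i, (q i : ℝ) * ((y i - x i : ℤ) : ℝ)) : ℝ) : EReal) + f x ≤ f y := by
  obtain ⟨fx, hfx⟩ := (hZ x).resolve_left hx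
  obtain ⟨q, hbox, hloc⟩ := exists_local f p hZ hf.2 x fx hfx hp
  exact ⟨q, hbox, local_to_global f hZ hf.2 x fx hfx q hloc⟩
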